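/- For every positive integer k and every complex number z, the polynomial identity holds: sum over i from 0 to k of i! * (z+i+1)(z+i+2)...(z+k) equals ( z(z+1)(z+2)...(z+k) - (k+1)! ) / (z-1), i.e., (z-1) * sum_{i=0}^{k} i! * prod_{j=i+1}^{k} (z+j) = z * prod_{j=1}^{k} (z+j) - (k+1)!. -/
import Mathlib

theorem aux_0 (k : ℕ) (z : ℂ) :
    (z - 1) * ∑ i ∈ Finset.range (k + 1),
        (Nat.factorial i : ℂ) * ∏ j ∈ Finset.Icc (i + 1) k, (z + (j : ℂ)) =
      z * ∏ j ∈ Finset.Icc 1 k, (z + (j : ℂ)) - (Nat.factorial (k + 1) : ℂ) := by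
  induction k with
  | zero => simp [Nat.factorial]
  | succ n ih =>
    rw [Finset.sum_range_succ]
    have hsum : ∀ i ∈ Finset.range (n + 1),
        (Nat.factorial i : ℂ) * ∏ j ∈ Finset.Icc (i + 1) (n + 1), (z + (j : ℂ)) =
        ((Nat.factorial i : ℂ) * ∏ j ∈ Finset.Icc (i + 1) n, (z + (j : ℂ))) * (z + (n + 1 : ℕ)) := by
      intro i hi
      have := Finset.mem_range.mp hi
      rw [Finset.prod_Icc_succ_top (by omega : i + 1 ≤ n + 1)]
      ring
    rw [Finset.sum_congr rfl hsum, ← Finset.sum_mul,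
      Finset.prod_Icc_succ_top (by omega : 1 ≤ n + 1)]
    have h2 : Finset.Icc (n + 1 + 1) (n + 1) = ∅ := by
      apply Finset.Icc_eq_empty; omega
    rw [h2, Finset.prod_empty]
    push_cast [Nat.factorial_succ] at ih ⊢
    linear_combination (z + (n : ℂ) + 1) * ih

theorem stmt_0 (k : ℕ) (hk : 0 < k) (z : ℂ) :
    (z - 1) * ∑ i ∈ Finset.range (k + 1),
        (Nat.factorial i : ℂ) * ∏ j ∈ Finset.Icc (i + 1) k, (z + (j : ℂ)) =
      z * ∏ j ∈ Finset.Icc 1 k, (z + (j : ℂ)) - (Nat.factorial (k + 1) : ℂ) := by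
  exact aux_0 k z
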